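/- arXiv:1904.04870 — 2 statements merged into one kernel-verified Lean document; each statement's English description precedes it below -/
import Mathlib

section
/- Let G be a simple graph on n vertices with Seidel matrix eigenvalues λ_1,...,λ_n. If |det(S(G))| ≥ n-1 and Σ λ_i² = n(n-1), then for every 0 < p < 2, Σ |λ_i|^p ≥ (n-1)^p + (n-1). -/
open Real

private lemma gh_expc (q t : ℝ) : HasDerivAt (fun s => exp (q * s)) (q * exp (q * t)) t := by
  exact ((Real.hasDerivAt_exp (q * t)).comp t ((hasDerivAt_id t).const_mul q)).congr_deriv (by ring)

private lemma gh_key1a {q : ℝ} (hq0 : 0 ≤ q) (hq1 : q ≤ 1) :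
    ∀ s, 0 ≤ s → exp (q * s) - 1 ≤ q * (exp s - 1) := by
  set g : ℝ → ℝ := fun s => q * (exp s - 1) - (exp (q * s) - 1) with hg
  have hg' : ∀ s, HasDerivAt g (q * exp s - q * exp (q * s)) s := by
    intro s
    exact (((Real.hasDerivAt_exp s).sub_const 1).const_mul q).sub ((gh_expc q s).sub_const 1)
  have hmono : MonotoneOn g (Set.Ici 0) := by
    apply monotoneOn_of_deriv_nonneg (convex_Ici 0)
    · exact Continuous.continuousOn (by fun_prop)
    · exact fun s _ => (hg' s).differentiableAt.differentiableWithinAt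
    · intro s hs
      rw [(hg' s).deriv]
      have hs0 : (0:ℝ) ≤ s := le_of_lt (by simpa using hs)
      have : exp (q * s) ≤ exp s := exp_le_exp.2 (by nlinarith)
      nlinarith
  intro s hs
  have h0 : g 0 = 0 := by simp [hg]
  have := hmono (Set.self_mem_Ici) hs hs
  rw [h0] at this
  simp only [hg] at this
  linarith

private lemma gh_key1 {q L : ℝ} (hq0 : 0 ≤ q) (hq1 : q ≤ 1) (hL : 0 ≤ L) :
    exp (q * L) - 1 - q * L ≤ q ^ 2 * (exp L - 1 - L) := by
  set G : ℝ → ℝ := fun s => q ^ 2 * (exp s - 1 - s) - (exp (q * s) - 1 - q * s) with hG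
  have hG' : ∀ s, HasDerivAt G (q ^ 2 * (exp s - 1) - (q * exp (q * s) - q)) s := by
    intro s
    have h1 : HasDerivAt (fun s : ℝ => exp s - 1 - s) (exp s - 1) s := by
      exact (((Real.hasDerivAt_exp s).sub_const 1).sub (hasDerivAt_id s)).congr_deriv (by ring)
    have h2 : HasDerivAt (fun s : ℝ => exp (q * s) - 1 - q * s) (q * exp (q * s) - q) s := by
      exact (((gh_expc q s).sub_const 1).sub ((hasDerivAt_id s).const_mul q)).congr_deriv (by ring)
    exact (h1.const_mul (q ^ 2)).sub h2
  have hmono : MonotoneOn G (Set.Ici 0) := by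
    apply monotoneOn_of_deriv_nonneg (convex_Ici 0)
    · exact Continuous.continuousOn (by fun_prop)
    · exact fun s _ => (hG' s).differentiableAt.differentiableWithinAt
    · intro s hs
      rw [(hG' s).deriv]
      have hs0 : (0:ℝ) ≤ s := le_of_lt (by simpa using hs)
      have := gh_key1a hq0 hq1 s hs0
      nlinarith
  have h0 : G 0 = 0 := by simp [hG]
  have := hmono (Set.self_mem_Ici) hL hL
  rw [h0] at this
  simp only [hG] at this
  linarith

private lemma gh_key2 {q a L : ℝ} (hq : 0 < q) (hq1 : q < 1) (ha : 0 < a) (haq : a ≤ q ^ 2)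
    (hFL : 0 ≤ exp (q * L) - a * exp L - (q - a) * L - (1 - a)) :
    ∀ t, t ≤ L → 0 ≤ exp (q * t) - a * exp t - (q - a) * t - (1 - a) := by
  set F : ℝ → ℝ := fun t => exp (q * t) - a * exp t - (q - a) * t - (1 - a) with hFdef
  set F' : ℝ → ℝ := fun t => q * exp (q * t) - a * exp t - (q - a) with hF'def
  have hF : ∀ t, HasDerivAt F (F' t) t := by
    intro t
    have := (((gh_expc q t).sub ((Real.hasDerivAt_exp t).const_mul a)).sub
      ((hasDerivAt_id t).const_mul (q - a))).sub_const (1 - a)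
    simpa [hFdef, hF'def, mul_comm] using this
  have hF' : ∀ t, HasDerivAt F' (q ^ 2 * exp (q * t) - a * exp t) t := by
    intro t
    have h := (((gh_expc q t).const_mul q).sub
      ((Real.hasDerivAt_exp t).const_mul a)).sub_const (q - a)
    rw [hF'def]
    have he : q ^ 2 * exp (q * t) - a * exp t = q * (q * exp (q * t)) - a * exp t := by ring
    rw [he]
    exact h
  have hq1' : (0:ℝ) < 1 - q := by linarith
  have hqa1 : (1:ℝ) ≤ q ^ 2 / a := (one_le_div ha).2 haq
  set T : ℝ := Real.log (q ^ 2 / a) / (1 - q) with hTdef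
  have hT0 : 0 ≤ T := div_nonneg (Real.log_nonneg hqa1) (le_of_lt hq1')
  have hexpT : exp ((1 - q) * T) = q ^ 2 / a := by
    rw [hTdef, mul_div_cancel₀ _ (ne_of_gt hq1')]
    exact Real.exp_log (by positivity)
  have hsplit : ∀ t : ℝ, exp t = exp (q * t) * exp ((1 - q) * t) := by
    intro t; rw [← Real.exp_add]; ring_nf
  have hFpp : ∀ t, t ≤ T → 0 ≤ q ^ 2 * exp (q * t) - a * exp t := by
    intro t ht
    have h1 : exp ((1 - q) * t) ≤ exp ((1 - q) * T) := exp_le_exp.2 (by nlinarith)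
    rw [hexpT] at h1
    have heq : a * exp t = a * exp (q * t) * exp ((1 - q) * t) := by rw [hsplit t]; ring
    have h2 : a * exp (q * t) * exp ((1 - q) * t) ≤ a * exp (q * t) * (q ^ 2 / a) :=
      mul_le_mul_of_nonneg_left h1 (by positivity)
    have h3 : a * exp (q * t) * (q ^ 2 / a) = q ^ 2 * exp (q * t) := by field_simp
    linarith
  have hFppn : ∀ t, T ≤ t → q ^ 2 * exp (q * t) - a * exp t ≤ 0 := by
    intro t ht
    have h1 : exp ((1 - q) * T) ≤ exp ((1 - q) * t) := exp_le_exp.2 (by nlinarith)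
    rw [hexpT] at h1
    have heq : a * exp t = a * exp (q * t) * exp ((1 - q) * t) := by rw [hsplit t]; ring
    have h2 : a * exp (q * t) * (q ^ 2 / a) ≤ a * exp (q * t) * exp ((1 - q) * t) := by
      apply mul_le_mul_of_nonneg_left h1 (by positivity)
    have h3 : a * exp (q * t) * (q ^ 2 / a) = q ^ 2 * exp (q * t) := by field_simp
    nlinarith [exp_pos (q * t)]
  have hcont : Continuous F := by fun_prop
  have hcont' : Continuous F' := by fun_prop
  have hmonoF' : MonotoneOn F' (Set.Iic T) := by
    apply monotoneOn_of_deriv_nonneg (convex_Iic T) hcont'.continuousOn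
    · exact fun t _ => (hF' t).differentiableAt.differentiableWithinAt
    · intro t ht
      rw [(hF' t).deriv]
      exact hFpp t (le_of_lt (by simpa using ht))
  have hF'0 : F' 0 = 0 := by simp [hF'def]
  have hF'nonneg : ∀ t, 0 ≤ t → t ≤ T → 0 ≤ F' t := by
    intro t h0t htT
    have := hmonoF' (Set.mem_Iic.2 (h0t.trans htT)) (Set.mem_Iic.2 htT) h0t
    rwa [hF'0] at this
  have hF'nonpos : ∀ t, t ≤ 0 → F' t ≤ 0 := by
    intro t ht
    have := hmonoF' (Set.mem_Iic.2 (ht.trans hT0)) (Set.mem_Iic.2 hT0) ht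
    rwa [hF'0] at this
  have hF0 : F 0 = 0 := by simp [hFdef]
  have hIic : ∀ t, t ≤ 0 → 0 ≤ F t := by
    intro t ht
    have hanti : AntitoneOn F (Set.Iic 0) := by
      apply antitoneOn_of_deriv_nonpos (convex_Iic 0) hcont.continuousOn
      · exact fun s _ => (hF s).differentiableAt.differentiableWithinAt
      · intro s hs
        rw [(hF s).deriv]
        exact hF'nonpos s (le_of_lt (by simpa using hs))
    have := hanti (Set.mem_Iic.2 ht) Set.self_mem_Iic ht
    rw [hF0] at this; exact this
  have hIcc : ∀ t, 0 ≤ t → t ≤ T → 0 ≤ F t := by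
    intro t h0t htT
    have hmono : MonotoneOn F (Set.Icc 0 T) := by
      apply monotoneOn_of_deriv_nonneg (convex_Icc 0 T) hcont.continuousOn
      · exact fun s _ => (hF s).differentiableAt.differentiableWithinAt
      · intro s hs
        rw [interior_Icc] at hs
        rw [(hF s).deriv]
        exact hF'nonneg s (le_of_lt hs.1) (le_of_lt hs.2)
    have := hmono (Set.mem_Icc.2 ⟨le_refl 0, hT0⟩) (Set.mem_Icc.2 ⟨h0t, htT⟩) h0t
    rw [hF0] at this; exact this
  intro t htL
  rcases le_or_gt t 0 with h | h
  · exact hIic t h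
  rcases le_or_gt t T with h2 | h2
  · exact hIcc t (le_of_lt h) h2
  -- T < t ≤ L
  have hTL : T ≤ L := le_of_lt (lt_of_lt_of_le h2 htL)
  have hdF : deriv F = F' := funext fun s => (hF s).deriv
  have hconc : ConcaveOn ℝ (Set.Icc T L) F := by
    apply concaveOn_of_deriv2_nonpos (convex_Icc T L) hcont.continuousOn
    · exact fun s _ => (hF s).differentiableAt.differentiableWithinAt
    · rw [hdF]
      exact fun s _ => (hF' s).differentiableAt.differentiableWithinAt
    · intro s hs
      rw [interior_Icc] at hs
      show deriv (deriv F) s ≤ 0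
      rw [hdF, (hF' s).deriv]
      exact hFppn s (le_of_lt hs.1)
  have hFT : 0 ≤ F T := hIcc T hT0 (le_refl T)
  have hseg : t ∈ segment ℝ T L := by
    rw [segment_eq_Icc hTL]
    exact Set.mem_Icc.2 ⟨le_of_lt h2, htL⟩
  have := hconc.ge_on_segment (Set.left_mem_Icc.2 hTL) (Set.right_mem_Icc.2 hTL) hseg
  have hmin : (0:ℝ) ≤ min (F T) (F L) := le_min hFT hFL
  have hge : (0:ℝ) ≤ F t := hmin.trans this
  simpa [hFdef] using hge

private lemma gh_main {n : ℕ} (hn : 3 ≤ n) (l : Fin n → ℝ)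
    (hdet : (n : ℝ) - 1 ≤ |∏ i, l i|)
    (hsq : ∑ i, (l i) ^ 2 = n * (n - 1 : ℝ))
    {p : ℝ} (hp : 0 < p) (hp2 : p < 2) :
    ((n : ℝ) - 1) ^ p + ((n : ℝ) - 1) ≤ ∑ i, |l i| ^ p := by
  obtain ⟨u, hu_def⟩ : ∃ u : ℝ, u = (n : ℝ) - 1 := ⟨_, rfl⟩
  rw [← hu_def]
  have hn3 : (3:ℝ) ≤ (n:ℝ) := by exact_mod_cast hn
  have hu2 : 2 ≤ u := by rw [hu_def]; linarith
  have hu0 : 0 < u := by linarith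
  obtain ⟨q, hq_def⟩ : ∃ q : ℝ, q = p / 2 := ⟨_, rfl⟩
  have hq : 0 < q := by rw [hq_def]; linarith
  have hq1 : q < 1 := by rw [hq_def]; linarith
  obtain ⟨x, hx_def⟩ : ∃ x : Fin n → ℝ, x = fun i => (l i) ^ 2 := ⟨_, rfl⟩
  have hl0 : ∀ i, l i ≠ 0 := by
    intro i h
    have h0 : ∏ i, l i = 0 := Finset.prod_eq_zero (Finset.mem_univ i) h
    rw [h0] at hdet
    simp at hdet
    linarith
  have hx0 : ∀ i, 0 < x i := by
    intro i
    rw [hx_def]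
    rcases (sq_nonneg (l i)).lt_or_eq with h | h
    · exact h
    · exact absurd (by simpa using h.symm) (hl0 i)
  have hprod : u ^ 2 ≤ ∏ i, x i := by
    have h1 : ∏ i, x i = (∏ i, l i) ^ 2 := by
      rw [hx_def]
      exact Finset.prod_pow _ _ _
    have h2 : u ≤ |∏ i, l i| := hu_def ▸ hdet
    calc u ^ 2 ≤ |∏ i, l i| ^ 2 := by nlinarith [abs_nonneg (∏ i, l i)]
      _ = (∏ i, l i) ^ 2 := sq_abs _
      _ = ∏ i, x i := h1.symm
  have hS : ∑ i, x i = (n : ℝ) * u := by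
    rw [hx_def, hu_def]
    exact hsq
  obtain ⟨L, hL_def⟩ : ∃ L : ℝ, L = Real.log (u ^ 2) := ⟨_, rfl⟩
  have hL0 : 0 < L := by
    rw [hL_def]
    apply Real.log_pos
    nlinarith
  have hexpL : exp L = u ^ 2 := by rw [hL_def]; exact Real.exp_log (by positivity)
  have hlogsum : L ≤ ∑ i, Real.log (x i) := by
    rw [hL_def, ← Real.log_prod (fun i _ => ne_of_gt (hx0 i))]
    exact Real.log_le_log (by positivity) hprod
  have hid : (n : ℝ) * u - (n : ℝ) + 1 = u ^ 2 := by rw [hu_def]; ring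
  have hub : ∀ i, x i ≤ u ^ 2 := by
    intro i
    have e1 : Real.log (x i) + ∑ j ∈ Finset.univ.erase i, Real.log (x j)
        = ∑ j, Real.log (x j) :=
      Finset.add_sum_erase Finset.univ (fun j => Real.log (x j)) (Finset.mem_univ i)
    have e2 : (x i - 1) + ∑ j ∈ Finset.univ.erase i, (x j - 1) = ∑ j, (x j - 1) :=
      Finset.add_sum_erase Finset.univ (fun j => x j - 1) (Finset.mem_univ i)
    have e3 : ∑ j, (x j - 1) = (∑ j, x j) - (n : ℝ) := by
      rw [Finset.sum_sub_distrib, Finset.sum_const, Finset.card_univ, Fintype.card_fin,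
        nsmul_eq_mul, mul_one]
    have e4 : ∑ j ∈ Finset.univ.erase i, Real.log (x j)
        ≤ ∑ j ∈ Finset.univ.erase i, (x j - 1) :=
      Finset.sum_le_sum fun j _ => Real.log_le_sub_one_of_pos (hx0 j)
    have key : L + (x i - u ^ 2) ≤ Real.log (x i) := by
      have hS' := hS
      linarith [hlogsum, e1, e2, e3, e4, hid, hS']
    have key2 : Real.log (x i) - L ≤ x i / u ^ 2 - 1 := by
      have h := Real.log_le_sub_one_of_pos (div_pos (hx0 i) (show (0:ℝ) < u ^ 2 by positivity))
      rwa [Real.log_div (ne_of_gt (hx0 i)) (by positivity), ← hL_def] at h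
    have hcomb : x i - u ^ 2 ≤ x i / u ^ 2 - 1 := by linarith
    have hmul : (x i - u ^ 2) * u ^ 2 ≤ (x i / u ^ 2 - 1) * u ^ 2 :=
      mul_le_mul_of_nonneg_right hcomb (by positivity)
    have hsimp : (x i / u ^ 2 - 1) * u ^ 2 = x i - u ^ 2 := by field_simp
    by_contra hcon
    push_neg at hcon
    have h1 : 0 < x i - u ^ 2 := by linarith
    have h2 : (x i - u ^ 2) * 1 < (x i - u ^ 2) * u ^ 2 :=
      mul_lt_mul_of_pos_left (by nlinarith) h1
    linarith [hmul, hsimp, h2]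
  obtain ⟨N, hN_def⟩ : ∃ N : ℝ, N = exp (q * L) - 1 - q * L := ⟨_, rfl⟩
  obtain ⟨Dm, hDm_def⟩ : ∃ Dm : ℝ, Dm = exp L - 1 - L := ⟨_, rfl⟩
  have hN : 0 < N := by
    have := Real.add_one_lt_exp (show q * L ≠ 0 by positivity)
    rw [hN_def]; linarith
  have hDm : 0 < Dm := by
    have := Real.add_one_lt_exp (ne_of_gt hL0)
    rw [hDm_def]; linarith
  obtain ⟨a, ha_def⟩ : ∃ a : ℝ, a = N / Dm := ⟨_, rfl⟩
  have ha : 0 < a := by rw [ha_def]; exact div_pos hN hDm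
  have haq : a ≤ q ^ 2 := by
    rw [ha_def, div_le_iff₀ hDm]
    have := gh_key1 (le_of_lt hq) (le_of_lt hq1) (le_of_lt hL0)
    rw [hN_def, hDm_def]
    linarith
  have hq_a : a ≤ q := le_trans haq (by nlinarith)
  have haDm : a * Dm = N := by rw [ha_def]; exact div_mul_cancel₀ N (ne_of_gt hDm)
  have hFL : exp (q * L) - a * exp L - (q - a) * L - (1 - a) = 0 := by
    rw [hN_def, hDm_def] at haDm
    linear_combination -haDm
  have hpoint : ∀ i, a * x i + (q - a) * Real.log (x i) + (1 - a) ≤ |l i| ^ p := by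
    intro i
    have hxle : Real.log (x i) ≤ L := by
      rw [hL_def]
      exact Real.log_le_log (hx0 i) (hub i)
    have hk := gh_key2 hq hq1 ha haq hFL.symm.le (Real.log (x i)) hxle
    rw [Real.exp_log (hx0 i)] at hk
    have hlx : Real.log (x i) = 2 * Real.log (l i) := by
      rw [hx_def]
      simp only []
      rw [Real.log_pow]
      norm_num
    have habs : |l i| ^ p = exp (Real.log (l i) * p) := by
      rw [Real.rpow_def_of_pos (abs_pos.2 (hl0 i)), Real.log_abs]
    have hexpq : exp (q * Real.log (x i)) = |l i| ^ p := by
      rw [habs, hlx]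
      congr 1
      rw [hq_def]; ring
    linarith
  have hqL : q * L = Real.log u * p := by
    rw [hL_def, Real.log_pow]
    push_cast
    rw [hq_def]; ring
  have step1 : u ^ p = exp (q * L) := by
    rw [hqL, Real.rpow_def_of_pos hu0]
  have step2 : exp (q * L) + u = a * ((n:ℝ) * u) + (q - a) * L + (n:ℝ) * (1 - a) := by
    linear_combination hFL + a * hexpL + (a * (u - 1) + 1) * hu_def
  have step3 : a * ((n:ℝ) * u) + (q - a) * L + (n:ℝ) * (1 - a)
      ≤ a * (∑ i, x i) + (q - a) * (∑ i, Real.log (x i)) + (n:ℝ) * (1 - a) := by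
    rw [hS]
    have := mul_le_mul_of_nonneg_left hlogsum (sub_nonneg.2 hq_a)
    linarith
  have step4 : a * (∑ i, x i) + (q - a) * (∑ i, Real.log (x i)) + (n:ℝ) * (1 - a)
      = ∑ i, (a * x i + (q - a) * Real.log (x i) + (1 - a)) := by
    rw [Finset.sum_add_distrib, Finset.sum_add_distrib, ← Finset.mul_sum, ← Finset.mul_sum,
      Finset.sum_const, Finset.card_univ, Fintype.card_fin, nsmul_eq_mul]
  have step5 : ∑ i, (a * x i + (q - a) * Real.log (x i) + (1 - a)) ≤ ∑ i, |l i| ^ p :=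
    Finset.sum_le_sum fun i _ => hpoint i
  calc u ^ p + u = exp (q * L) + u := by rw [step1]
    _ = a * ((n:ℝ) * u) + (q - a) * L + (n:ℝ) * (1 - a) := step2
    _ ≤ a * (∑ i, x i) + (q - a) * (∑ i, Real.log (x i)) + (n:ℝ) * (1 - a) := step3
    _ = ∑ i, (a * x i + (q - a) * Real.log (x i) + (1 - a)) := step4
    _ ≤ ∑ i, |l i| ^ p := step5

open Real in
/-- If `λ_1, ..., λ_n` are reals with `∑ λ_i² = n(n-1)` and `|∏ λ_i| ≥ n-1`,
then for every `0 < p < 2`, `∑ |λ_i|^p ≥ (n-1)^p + (n-1)`. -/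
theorem ghorbani_ineq {n : ℕ} (l : Fin n → ℝ)
    (hdet : (n : ℝ) - 1 ≤ |∏ i, l i|)
    (hsq : ∑ i, (l i) ^ 2 = n * (n - 1 : ℝ)) :
    ∀ p : ℝ, 0 < p → p < 2 →
      ((n : ℝ) - 1) ^ p + ((n : ℝ) - 1) ≤ ∑ i, |l i| ^ p := by
  intro p hp hp2
  rcases Nat.lt_or_ge n 3 with hn | hn
  · interval_cases n
    · -- n = 0
      simp only [Nat.cast_zero, Finset.univ_eq_empty, Finset.sum_empty]
      have hneg : ((0:ℝ) - 1) < 0 := by norm_num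
      rw [Real.rpow_def_of_neg hneg]
      have h1 : Real.log ((0:ℝ) - 1) = 0 := by norm_num
      rw [h1]
      have := Real.cos_le_one (p * π)
      simp only [zero_mul, Real.exp_zero, one_mul]
      linarith
    · -- n = 1
      have h0 : ((1:ℕ) : ℝ) - 1 = 0 := by norm_num
      rw [h0, Real.zero_rpow (ne_of_gt hp)]
      have : (0:ℝ) ≤ ∑ i : Fin 1, |l i| ^ p :=
        Finset.sum_nonneg fun i _ => Real.rpow_nonneg (abs_nonneg _) p
      linarith
    · -- n = 2
      rw [Fin.prod_univ_two] at hdet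
      rw [Fin.sum_univ_two] at hsq
      have h1 : (1:ℝ) ≤ |l 0 * l 1| := by
        have : ((2:ℕ):ℝ) - 1 = 1 := by norm_num
        rwa [this] at hdet
      have h2 : (l 0) ^ 2 + (l 1) ^ 2 = 2 := by
        have : ((2:ℕ):ℝ) * (((2:ℕ):ℝ) - 1) = 2 := by norm_num
        rwa [this] at hsq
      have h3 : 1 ≤ (l 0) ^ 2 * (l 1) ^ 2 := by
        nlinarith [sq_abs (l 0 * l 1), abs_nonneg (l 0 * l 1)]
      have h40 : (l 0) ^ 2 = 1 := by nlinarith [sq_nonneg ((l 0)^2 - (l 1)^2)]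
      have h41 : (l 1) ^ 2 = 1 := by nlinarith [sq_nonneg ((l 0)^2 - (l 1)^2)]
      have habs0 : |l 0| = 1 := by
        have hz : (|l 0| - 1) * (|l 0| + 1) = 0 := by
          linear_combination sq_abs (l 0) + h40
        rcases mul_eq_zero.1 hz with h | h
        · linarith
        · linarith [abs_nonneg (l 0)]
      have habs1 : |l 1| = 1 := by
        have hz : (|l 1| - 1) * (|l 1| + 1) = 0 := by
          linear_combination sq_abs (l 1) + h41
        rcases mul_eq_zero.1 hz with h | h
        · linarith
        · linarith [abs_nonneg (l 1)]
      rw [Fin.sum_univ_two, habs0, habs1]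
      norm_num [Real.one_rpow]
  · exact gh_main hn l hdet hsq hp hp2
end

section
/- For any simple graph G on n vertices, det(S(G)) ≡ (-1)^{n-1}(n-1) (mod 4); in particular, if n is even then det(S(G)) is odd, so det(S(G)) ≠ 0. -/
/-- For a simple graph `G` on `n ≥ 1` vertices,
`det S(G) ≡ (-1)^{n-1} (n-1) (mod 4)`; in particular if `n` is even then
`det S(G)` is odd, hence nonzero. -/
theorem seidel_det_mod_four {n : ℕ} (hn : 1 ≤ n) (G : SimpleGraph (Fin n))
    [DecidableRel G.Adj] (S : Matrix (Fin n) (Fin n) ℤ)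
    (hS : ∀ i j, S i j = if i = j then 0 else if G.Adj i j then -1 else 1) :
    S.det ≡ (-1) ^ (n - 1) * ((n : ℤ) - 1) [ZMOD 4] ∧
      (Even n → Odd S.det ∧ S.det ≠ 0) := by
  classical
  set M : Matrix (Fin n) (Fin n) ℤ := Matrix.of (fun _ _ : Fin n => (1:ℤ)) - 1 with hMdef
  have hMe : ∀ i j, M i j = if i = j then 0 else 1 := by
    intro i j
    by_cases hij : i = j <;> simp [hMdef, Matrix.one_apply, hij]
  -- determinant of M
  have hdetM : M.det = (-1)^(n-1) * ((n:ℤ) - 1) := by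
    have h : M = -(1 + Matrix.replicateCol (Fin 1) (fun _ => (1:ℤ)) *
        Matrix.replicateRow (Fin 1) (fun _ => (-1:ℤ))) := by
      ext i j
      simp [hMdef, Matrix.mul_apply, Matrix.one_apply]
      by_cases hij : i = j <;> simp [hij]
    rw [h, Matrix.det_neg]
    erw [Matrix.det_one_add_replicateCol_mul_replicateRow (ι := Fin 1)]
    obtain ⟨m, rfl⟩ := Nat.exists_eq_add_of_le hn
    simp [dotProduct]
    ring
  -- symmetry of S
  have hsymm : ∀ i j, S i j = S j i := by
    intro i j
    rw [hS, hS]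
    by_cases hij : i = j
    · simp [hij]
    · simp [hij, Ne.symm hij, G.adj_comm]
  -- off-diagonal entries of S are ±1
  have hoff : ∀ i j, i ≠ j → S i j = 1 ∨ S i j = -1 := by
    intro i j hij
    rw [hS]
    by_cases h : G.Adj i j <;> simp [hij, h]
  -- parity: entries of S and M agree mod 2
  have hpar : ∀ i j, (2:ℤ) ∣ (S i j - M i j) := by
    intro i j
    rw [hMe]
    by_cases hij : i = j
    · simp [hij, hS]
    · rcases hoff i j hij with h | h
      · simp [hij, h]
      · rw [h]; simp [hij]
  -- products over permutations
  set P : Equiv.Perm (Fin n) → ℤ := fun σ => ∏ i, S (σ i) i with hP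
  set Q : Equiv.Perm (Fin n) → ℤ := fun σ => ∏ i, M (σ i) i with hQ
  set D : Equiv.Perm (Fin n) → ℤ :=
    fun σ => (Equiv.Perm.sign σ : ℤ) * P σ - (Equiv.Perm.sign σ : ℤ) * Q σ with hD
  -- invariance under inverse
  have hPinv : ∀ (T : Matrix (Fin n) (Fin n) ℤ), (∀ i j, T i j = T j i) →
      ∀ σ : Equiv.Perm (Fin n), (∏ i, T (σ⁻¹ i) i) = (∏ i, T (σ i) i) := by
    intro T hT σ
    have := Equiv.prod_comp σ (fun i => T (σ⁻¹ i) i)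
    rw [← this]
    refine Finset.prod_congr rfl ?_
    intro i _
    rw [show σ⁻¹ (σ i) = i from σ.symm_apply_apply i, hT]
  have hDinv : ∀ σ : Equiv.Perm (Fin n), D σ⁻¹ = D σ := by
    intro σ
    simp only [hD, hP, hQ, Equiv.Perm.sign_inv]
    rw [hPinv S hsymm, hPinv M (fun i j => by rw [hMe, hMe]; by_cases hij : i = j <;>
      simp [hij, Ne.symm, eq_comm])]
  -- parity of D
  have hDpar : ∀ σ : Equiv.Perm (Fin n), (2:ℤ) ∣ D σ := by
    intro σ
    have h2 : (2:ℤ) ∣ P σ - Q σ := by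
      have : ((P σ - Q σ : ℤ) : ZMod 2) = 0 := by
        push_cast [hP, hQ]
        rw [sub_eq_zero]
        refine Finset.prod_congr rfl ?_
        intro i _
        have := hpar (σ i) i
        have h0 : ((S (σ i) i - M (σ i) i : ℤ) : ZMod 2) = 0 :=
          (ZMod.intCast_zmod_eq_zero_iff_dvd _ 2).mpr this
        push_cast at h0
        linear_combination h0
      exact (ZMod.intCast_zmod_eq_zero_iff_dvd _ 2).mp this
    have : D σ = (Equiv.Perm.sign σ : ℤ) * (P σ - Q σ) := by rw [hD]; ring
    rw [this]
    exact Dvd.dvd.mul_left h2 _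
  -- D vanishes on involutions
  have hDfix : ∀ σ : Equiv.Perm (Fin n), σ⁻¹ = σ → D σ = 0 := by
    intro σ hinv
    have hPQ : P σ = Q σ := by
      by_cases hfix : ∃ i, σ i = i
      · obtain ⟨i, hi⟩ := hfix
        simp only [hP, hQ]
        rw [Finset.prod_eq_zero (Finset.mem_univ i), Finset.prod_eq_zero (Finset.mem_univ i)]
        · rw [hMe]; simp [hi]
        · rw [hS]; simp [hi]
      · push_neg at hfix
        have hQ1 : Q σ = 1 := by
          simp only [hQ]
          refine Finset.prod_eq_one ?_
          intro i _
          rw [hMe]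
          simp [hfix i]
        have hσσ : ∀ i, σ (σ i) = i := by
          intro i
          nth_rewrite 1 [← hinv]
          exact σ.symm_apply_apply i
        have hP1 : P σ = 1 := by
          simp only [hP]
          refine Finset.prod_ninvolution σ ?_ ?_ (fun i => Finset.mem_univ _) hσσ
          · intro i
            rw [hσσ i, hsymm i (σ i)]
            rcases hoff (σ i) i (hfix i) with h | h <;> rw [h] <;> norm_num
          · intro i _
            exact hfix i
        rw [hP1, hQ1]
    simp only [hD, hPQ]
    ring
  -- main congruence mod 4
  have key : (4:ℤ) ∣ S.det - M.det := by
    have hsum : S.det - M.det = ∑ σ : Equiv.Perm (Fin n), D σ := by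
      rw [Matrix.det_apply', Matrix.det_apply', ← Finset.sum_sub_distrib]
      rfl
    have h0 : ((S.det - M.det : ℤ) : ZMod 4) = 0 := by
      rw [hsum, Int.cast_sum]
      refine Finset.sum_ninvolution (fun σ => σ⁻¹) ?_ ?_
        (fun σ => Finset.mem_univ _) (fun σ => inv_inv σ)
      · intro σ
        have : D σ + D σ⁻¹ = 2 * D σ := by rw [hDinv]; ring
        have h4 : (4:ℤ) ∣ D σ + D σ⁻¹ := by
          rw [this]
          obtain ⟨k, hk⟩ := hDpar σ
          exact ⟨k, by rw [hk]; ring⟩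
        have := (ZMod.intCast_zmod_eq_zero_iff_dvd _ 4).mpr h4
        push_cast at this ⊢
        linear_combination this
      · intro σ hne heq
        exact hne (by rw [hDfix σ heq]; simp)
    exact (ZMod.intCast_zmod_eq_zero_iff_dvd _ 4).mp h0
  have hmod : S.det ≡ (-1)^(n-1) * ((n:ℤ) - 1) [ZMOD 4] := by
    rw [← hdetM]
    exact (Int.modEq_iff_dvd.mpr (by simpa using key)).symm
  refine ⟨hmod, ?_⟩
  intro heven
  have hxodd : Odd ((-1:ℤ)^(n-1) * ((n:ℤ) - 1)) := by
    refine Odd.mul (Odd.pow ⟨-1, by ring⟩) ?_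
    have : Even ((n:ℤ)) := by exact (Int.even_coe_nat n).mpr heven
    exact this.sub_odd odd_one
  have h2 : S.det ≡ (-1)^(n-1) * ((n:ℤ) - 1) [ZMOD 2] := hmod.of_dvd (by norm_num)
  have hodd : Odd S.det := by
    rw [Int.odd_iff] at hxodd ⊢
    rw [Int.ModEq] at h2
    rw [h2, hxodd]
  exact ⟨hodd, fun h => by rw [h] at hodd; exact (by norm_num : ¬ Odd (0:ℤ)) hodd⟩
end
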